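/- Assume f : ℝ → ℝ is continuously differentiable and there is β > 0 with f(β) ≤ 0 ≤ f(−β); let κ ≥ max_{|x|≤β}|f′(x)|, ε > 0, τ > 0 and h > 0. Let φ and φ̂ be periodic grid functions with ‖φ‖_∞ ≤ β satisfying the stabilized BDF1 step (φ̂ − φ)/τ = ε²Δ_hφ̂ + f(φ) − κ(φ̂ − φ), where f acts pointwise. Then ‖φ̂‖_∞ ≤ β, with no restriction on τ. -/

import Mathlib

/-- Discrete Laplace operator on periodic grid functions. -/
noncomputable def lapH (M : ℕ) (h : ℝ) (v : ZMod M × ZMod M → ℝ) :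
    ZMod M × ZMod M → ℝ :=
  fun p => (v (p.1 + 1, p.2) + v (p.1 - 1, p.2) + v (p.1, p.2 + 1) + v (p.1, p.2 - 1)
    - 4 * v p) / h ^ 2

/-- Discrete maximum norm of a periodic grid function. -/
noncomputable def maxNorm (M : ℕ) [NeZero M] (v : ZMod M × ZMod M → ℝ) : ℝ :=
  Finset.univ.sup' ⟨(0, 0), Finset.mem_univ _⟩ fun p => |v p|

lemma gmono (τ κ β : ℝ) (hτ : 0 < τ) (hβ : 0 < β)
    (f : ℝ → ℝ) (hf : ContDiff ℝ 1 f)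
    (hκ : ∀ x : ℝ, |x| ≤ β → |deriv f x| ≤ κ) :
    MonotoneOn (fun x => (1 + κ * τ) * x + τ * f x) (Set.Icc (-β) β) := by
  have hdf : Differentiable ℝ f := hf.differentiable one_ne_zero
  have hder : ∀ x : ℝ, HasDerivAt (fun x => (1 + κ * τ) * x + τ * f x)
      ((1 + κ * τ) + τ * deriv f x) x := by
    intro x
    have h1 : HasDerivAt (fun x : ℝ => (1 + κ * τ) * x) ((1 + κ * τ) * 1) x :=
      (hasDerivAt_id x).const_mul _
    have h2 : HasDerivAt (fun x => τ * f x) (τ * deriv f x) x :=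
      ((hdf x).hasDerivAt).const_mul τ
    have h3 := h1.add h2
    rw [mul_one] at h3
    exact h3
  apply monotoneOn_of_deriv_nonneg (convex_Icc _ _)
  · exact ((continuous_const.mul continuous_id).add (continuous_const.mul hf.continuous)).continuousOn
  · intro x hx
    exact (hder x).differentiableAt.differentiableWithinAt
  · intro x hx
    rw [(hder x).deriv]
    rw [interior_Icc] at hx
    have hxb : |x| ≤ β := by
      rw [abs_le]; exact ⟨le_of_lt hx.1, le_of_lt hx.2⟩
    have := hκ x hxb
    have h1 : deriv f x ≥ -κ := by
      have := abs_le.mp this; linarith [this.1]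
    nlinarith

theorem stmt6 (M : ℕ) [NeZero M] (hM : 1 ≤ M) (h ε τ κ β : ℝ)
    (hh : 0 < h) (hε : 0 < ε) (hτ : 0 < τ)
    (f : ℝ → ℝ) (hf : ContDiff ℝ 1 f) (hβ : 0 < β)
    (hfβ : f β ≤ 0) (hfβ' : 0 ≤ f (-β))
    (hκ : ∀ x : ℝ, |x| ≤ β → |deriv f x| ≤ κ)
    (φ φhat : ZMod M × ZMod M → ℝ)
    (hφ : maxNorm M φ ≤ β)
    (heq : ∀ p, (φhat p - φ p) / τ =
      ε ^ 2 * lapH M h φhat p + f (φ p) - κ * (φhat p - φ p)) :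
    maxNorm M φhat ≤ β := by
  classical
  have hκ0 : 0 ≤ κ := le_trans (abs_nonneg _) (hκ 0 (by simp [abs_of_nonneg, hβ.le]))
  have h1κτ : 0 < 1 + κ * τ := by nlinarith
  have hφp : ∀ p, |φ p| ≤ β := fun p =>
    le_trans (Finset.le_sup' (fun q => |φ q|) (Finset.mem_univ p)) hφ
  have hφmem : ∀ p, φ p ∈ Set.Icc (-β) β := fun p => abs_le.mp (hφp p)
  have hmono := gmono τ κ β hτ hβ f hf hκ
  have hgβ : ∀ p, (1 + κ * τ) * φ p + τ * f (φ p) ≤ (1 + κ * τ) * β := by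
    intro p
    have := hmono (hφmem p) (Set.right_mem_Icc.mpr (by linarith)) (hφmem p).2
    simp only at this
    nlinarith
  have hgβ' : ∀ p, -((1 + κ * τ) * β) ≤ (1 + κ * τ) * φ p + τ * f (φ p) := by
    intro p
    have := hmono (Set.left_mem_Icc.mpr (by linarith)) (hφmem p) (hφmem p).1
    simp only at this
    nlinarith
  -- the key identity at each point
  have hid : ∀ p, (1 + κ * τ) * φhat p =
      (1 + κ * τ) * φ p + τ * f (φ p) + τ * (ε ^ 2 * lapH M h φhat p) := by
    intro p
    have := heq p
    field_simp at this
    nlinarith [this]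
  -- pick the maximizer of |φhat|
  obtain ⟨p0, -, hp0⟩ := Finset.exists_mem_eq_sup' (α := ℝ)
    ⟨((0 : ZMod M), (0 : ZMod M)), Finset.mem_univ _⟩ (fun p => |φhat p|)
  have hmax : ∀ q, |φhat q| ≤ |φhat p0| := by
    intro q
    rw [← hp0]
    exact Finset.le_sup' (fun p => |φhat p|) (Finset.mem_univ q)
  rw [maxNorm, hp0]
  rcases le_or_gt 0 (φhat p0) with hpos | hneg
  · rw [abs_of_nonneg hpos]
    -- lapH ≤ 0 at p0
    have hle : ∀ q, φhat q ≤ φhat p0 := by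
      intro q
      have h2 := hmax q
      rw [abs_of_nonneg hpos] at h2
      exact le_trans (le_abs_self _) h2
    have hlap : lapH M h φhat p0 ≤ 0 := by
      unfold lapH
      apply div_nonpos_of_nonpos_of_nonneg
      · have := hle (p0.1 + 1, p0.2)
        have := hle (p0.1 - 1, p0.2)
        have := hle (p0.1, p0.2 + 1)
        have := hle (p0.1, p0.2 - 1)
        linarith
      · positivity
    have hL : τ * (ε ^ 2 * lapH M h φhat p0) ≤ 0 :=
      mul_nonpos_of_nonneg_of_nonpos hτ.le
        (mul_nonpos_of_nonneg_of_nonpos (sq_nonneg ε) hlap)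
    have hkey : (1 + κ * τ) * φhat p0 ≤ (1 + κ * τ) * β := by
      have := hid p0
      have := hgβ p0
      linarith
    exact le_of_mul_le_mul_left hkey h1κτ
  · rw [abs_of_neg hneg]
    have hle : ∀ q, φhat p0 ≤ φhat q := by
      intro q
      have := neg_abs_le (φhat q)
      have h2 := hmax q
      rw [abs_of_neg hneg] at h2
      linarith
    have hlap : 0 ≤ lapH M h φhat p0 := by
      unfold lapH
      apply div_nonneg
      · have := hle (p0.1 + 1, p0.2)
        have := hle (p0.1 - 1, p0.2)
        have := hle (p0.1, p0.2 + 1)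
        have := hle (p0.1, p0.2 - 1)
        linarith
      · positivity
    have hL : 0 ≤ τ * (ε ^ 2 * lapH M h φhat p0) :=
      mul_nonneg hτ.le (mul_nonneg (sq_nonneg ε) hlap)
    have hkey : (1 + κ * τ) * (-β) ≤ (1 + κ * τ) * φhat p0 := by
      have := hid p0
      have := hgβ' p0
      nlinarith
    have := le_of_mul_le_mul_left hkey h1κτ
    linarith
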